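/- Let (V,d) be a finite metric space and F, F* ⊆ V nonempty. Let φ : V → F and φ* : V → F* be closest-facility assignments, set A_j = d(j,F), O_j = d(j,F*), N(R) = φ^{-1}(R), N*(G) = (φ*)^{-1}(G), and let η : F* → F be a nearest-facility map. Let t ≥ 1 be an integer, and suppose R_i ⊆ F and F*_i ⊆ F* satisfy |R_i| = |F*_i| = s > t, and let R̂_i ⊆ R_i with |R̂_i| = s − 1 such that η^{-1}(r) = ∅ for every r ∈ R̂_i. Then (1/(s−1)) · Σ_{(f*,r) ∈ F*_i × R̂_i} [kmed((F \ {r}) ∪ {f*}) − kmed(F)] ≤ Σ_{j ∈ N*(F*_i)} (O_j − A_j) + 2(1 + 1/t)·Σ_{j ∈ N(R_i)} O_j. -/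

import Mathlib

open Finset

/-- Distance from a client `j` to a nonempty facility set `F`: `min_{f ∈ F} d(j,f)`. -/
noncomputable def distSet {V : Type*} [MetricSpace V] (j : V) (F : Finset V)
    (hF : F.Nonempty) : ℝ :=
  F.inf' hF fun f => dist j f

/-- The k-median cost of a nonempty facility set `F`: `∑_{j ∈ V} d(j,F)`. -/
noncomputable def kmed {V : Type*} [MetricSpace V] [Fintype V] (F : Finset V)
    (hF : F.Nonempty) : ℝ :=
  ∑ j : V, distSet j F hF

lemma distSet_nonneg {V : Type*} [MetricSpace V] (j : V) (F : Finset V) (hF : F.Nonempty) :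
    0 ≤ distSet j F hF := by
  obtain ⟨f, hf, hfe⟩ := F.exists_mem_eq_inf' hF (fun f => dist j f)
  rw [distSet, hfe]; exact dist_nonneg

lemma distSet_le {V : Type*} [MetricSpace V] (j f : V) (F : Finset V) (hF : F.Nonempty)
    (hf : f ∈ F) : distSet j F hF ≤ dist j f := Finset.inf'_le _ hf

lemma swap_bound {V : Type*} [MetricSpace V] [Fintype V] [DecidableEq V]
    (F Fstar : Finset V) (hF : F.Nonempty) (hFstar : Fstar.Nonempty)
    (φ φstar η : V → V)
    (hφ : ∀ j : V, φ j ∈ F ∧ dist j (φ j) = distSet j F hF)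
    (hφstar : ∀ j : V, φstar j ∈ Fstar ∧ dist j (φstar j) = distSet j Fstar hFstar)
    (hη : ∀ g ∈ Fstar, η g ∈ F ∧ ∀ f ∈ F, dist g (η g) ≤ dist g f)
    (fs r : V) (hfs : fs ∈ Fstar) (hr : r ∈ F)
    (hdeg : ∀ g ∈ Fstar, η g ≠ r) :
    kmed (insert fs (F.erase r)) (insert_nonempty _ _) - kmed F hF ≤
      (∑ j ∈ univ.filter (fun j => φstar j = fs),
        (distSet j Fstar hFstar - distSet j F hF))
      + ∑ j ∈ univ.filter (fun j => φ j = r ∧ φstar j ≠ fs),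
          2 * distSet j Fstar hFstar := by
  classical
  set F' : Finset V := insert fs (F.erase r) with hF'
  have hF'ne : F'.Nonempty := insert_nonempty _ _
  have key : ∀ j : V, distSet j F' hF'ne - distSet j F hF ≤
      (if φstar j = fs then distSet j Fstar hFstar - distSet j F hF
       else if φ j = r then 2 * distSet j Fstar hFstar else 0) := by
    intro j
    by_cases h1 : φstar j = fs
    · simp only [h1, if_pos]
      have : distSet j F' hF'ne ≤ dist j fs :=
        distSet_le j fs F' hF'ne (mem_insert_self _ _)
      have h2 : dist j fs = distSet j Fstar hFstar := by
        rw [← h1]; exact (hφstar j).2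
      linarith [h2 ▸ this]
    · rw [if_neg h1]
      by_cases h2 : φ j = r
      · rw [if_pos h2]
        set g := φstar j with hg
        have hgF : g ∈ Fstar := (hφstar j).1
        have hηg : η g ∈ F := (hη g hgF).1
        have hηgr : η g ≠ r := hdeg g hgF
        have hmem : η g ∈ F' := mem_insert_of_mem (mem_erase.mpr ⟨hηgr, hηg⟩)
        have b1 : distSet j F' hF'ne ≤ dist j (η g) := distSet_le _ _ _ _ hmem
        have b2 : dist j (η g) ≤ dist j g + dist g (η g) := dist_triangle _ _ _
        have b3 : dist g (η g) ≤ dist g (φ j) := (hη g hgF).2 (φ j) (hφ j).1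
        have b4 : dist g (φ j) ≤ dist g j + dist j (φ j) := dist_triangle _ _ _
        have hO : dist j g = distSet j Fstar hFstar := (hφstar j).2
        have hA : dist j (φ j) = distSet j F hF := (hφ j).2
        have hsymm : dist g j = dist j g := dist_comm _ _
        linarith
      · rw [if_neg h2]
        have hmem : φ j ∈ F' := mem_insert_of_mem (mem_erase.mpr ⟨h2, (hφ j).1⟩)
        have := distSet_le j (φ j) F' hF'ne hmem
        rw [(hφ j).2] at this
        linarith
  have hsum : kmed F' hF'ne - kmed F hF ≤
      ∑ j : V, (if φstar j = fs then distSet j Fstar hFstar - distSet j F hF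
       else if φ j = r then 2 * distSet j Fstar hFstar else 0) := by
    rw [kmed, kmed, ← Finset.sum_sub_distrib]
    exact Finset.sum_le_sum fun j _ => key j
  refine hsum.trans_eq ?_
  rw [← Finset.sum_filter_add_sum_filter_not univ (fun j => φstar j = fs)]
  congr 1
  · exact Finset.sum_congr rfl fun j hj => if_pos (mem_filter.mp hj).2
  · calc ∑ j ∈ univ.filter (fun j => ¬ φstar j = fs),
        (if φstar j = fs then distSet j Fstar hFstar - distSet j F hF
         else if φ j = r then 2 * distSet j Fstar hFstar else 0)
        = ∑ j ∈ univ.filter (fun j => ¬ φstar j = fs),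
            (if φ j = r then 2 * distSet j Fstar hFstar else 0) :=
          Finset.sum_congr rfl fun j hj => if_neg (mem_filter.mp hj).2
      _ = ∑ j ∈ (univ.filter (fun j => ¬ φstar j = fs)).filter (fun j => φ j = r),
            2 * distSet j Fstar hFstar := (Finset.sum_filter _ _).symm
      _ = ∑ j ∈ univ.filter (fun j => φ j = r ∧ φstar j ≠ fs),
            2 * distSet j Fstar hFstar := by
          congr 1
          rw [Finset.filter_filter]
          apply Finset.filter_congr
          intro j _
          simp [and_comm]

/-- Averaged bound over the single swaps `F*_i × R̂_i` in a large block
(`|R_i| = |F*_i| = s > t`), where `R̂_i` consists of `s - 1` degree-0 elements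
of `R_i`. -/
theorem kmed_large_block_swap_bound {V : Type*} [MetricSpace V] [Fintype V] [DecidableEq V]
    (F Fstar : Finset V) (hF : F.Nonempty) (hFstar : Fstar.Nonempty)
    (φ φstar η : V → V)
    (hφ : ∀ j : V, φ j ∈ F ∧ dist j (φ j) = distSet j F hF)
    (hφstar : ∀ j : V, φstar j ∈ Fstar ∧ dist j (φstar j) = distSet j Fstar hFstar)
    (hη : ∀ g ∈ Fstar, η g ∈ F ∧ ∀ f ∈ F, dist g (η g) ≤ dist g f)
    (t : ℕ) (ht : 1 ≤ t) (s : ℕ) (hst : t < s)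
    (Ri : Finset V) (hRi : Ri ⊆ F) (hRicard : Ri.card = s)
    (Fsi : Finset V) (hFsi : Fsi ⊆ Fstar) (hFsicard : Fsi.card = s)
    (Rhat : Finset V) (hRhat : Rhat ⊆ Ri) (hRhatcard : Rhat.card = s - 1)
    (hdeg0 : ∀ r ∈ Rhat, ∀ g ∈ Fstar, η g ≠ r) :
    (1 / ((s : ℝ) - 1)) *
        ∑ p ∈ Fsi ×ˢ Rhat,
          (kmed (insert p.1 (F.erase p.2)) (insert_nonempty _ _) - kmed F hF) ≤
      (∑ j ∈ univ.filter (fun j => φstar j ∈ Fsi),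
        (distSet j Fstar hFstar - distSet j F hF))
      + 2 * (1 + 1 / (t : ℝ)) *
          ∑ j ∈ univ.filter (fun j => φ j ∈ Ri), distSet j Fstar hFstar := by
  classical
  have hs2 : 2 ≤ s := by omega
  set O : V → ℝ := fun j => distSet j Fstar hFstar with hOdef
  set A : V → ℝ := fun j => distSet j F hF with hAdef
  have hOnn : ∀ j, 0 ≤ O j := fun j => distSet_nonneg j Fstar hFstar
  set T1 : ℝ := ∑ j ∈ univ.filter (fun j => φstar j ∈ Fsi), (O j - A j) with hT1
  set T2 : ℝ := ∑ j ∈ univ.filter (fun j => φ j ∈ Ri), O j with hT2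
  have hT2nn : 0 ≤ T2 := Finset.sum_nonneg fun j _ => hOnn j
  -- per-swap bound summed over pairs
  have hpair : ∑ p ∈ Fsi ×ˢ Rhat,
      (kmed (insert p.1 (F.erase p.2)) (insert_nonempty _ _) - kmed F hF) ≤
      ((s : ℝ) - 1) * T1 + (s : ℝ) * (2 * T2) := by
    rw [Finset.sum_product]
    have step1 : ∀ fs ∈ Fsi, ∀ r ∈ Rhat,
        kmed (insert fs (F.erase r)) (insert_nonempty _ _) - kmed F hF ≤
        (∑ j ∈ univ.filter (fun j => φstar j = fs), (O j - A j))
        + ∑ j ∈ univ.filter (fun j => φ j = r ∧ φstar j ≠ fs), 2 * O j := by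
      intro fs hfs r hr
      exact swap_bound F Fstar hF hFstar φ φstar η hφ hφstar hη fs r
        (hFsi hfs) (hRi (hRhat hr)) (fun g hg => hdeg0 r hr g hg)
    calc ∑ fs ∈ Fsi, ∑ r ∈ Rhat,
        (kmed (insert fs (F.erase r)) (insert_nonempty _ _) - kmed F hF)
        ≤ ∑ fs ∈ Fsi, ∑ r ∈ Rhat,
          ((∑ j ∈ univ.filter (fun j => φstar j = fs), (O j - A j))
           + ∑ j ∈ univ.filter (fun j => φ j = r ∧ φstar j ≠ fs), 2 * O j) := by
          apply Finset.sum_le_sum; intro fs hfs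
          apply Finset.sum_le_sum; intro r hr
          exact step1 fs hfs r hr
      _ = ∑ fs ∈ Fsi, (((s : ℝ) - 1) * ∑ j ∈ univ.filter (fun j => φstar j = fs), (O j - A j)
            + ∑ r ∈ Rhat, ∑ j ∈ univ.filter (fun j => φ j = r ∧ φstar j ≠ fs), 2 * O j) := by
          apply Finset.sum_congr rfl; intro fs _
          rw [Finset.sum_add_distrib, Finset.sum_const, hRhatcard, nsmul_eq_mul]
          congr 2
          push_cast [Nat.cast_sub (by omega : 1 ≤ s)]
          ring
      _ ≤ ∑ fs ∈ Fsi, (((s : ℝ) - 1) * ∑ j ∈ univ.filter (fun j => φstar j = fs), (O j - A j)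
            + 2 * T2) := by
          apply Finset.sum_le_sum; intro fs _
          apply add_le_add_right
          calc ∑ r ∈ Rhat, ∑ j ∈ univ.filter (fun j => φ j = r ∧ φstar j ≠ fs), 2 * O j
              ≤ ∑ r ∈ Rhat, ∑ j ∈ univ.filter (fun j => φ j = r), 2 * O j := by
                apply Finset.sum_le_sum; intro r _
                apply Finset.sum_le_sum_of_subset_of_nonneg
                · apply Finset.monotone_filter_right
                  intro j _ hj; exact hj.1
                · intro j _ _; have := hOnn j; linarith
            _ = ∑ j ∈ univ.filter (fun j => φ j ∈ Rhat), 2 * O j := by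
                rw [← Finset.sum_fiberwise_of_maps_to
                  (fun j hj => (mem_filter.mp hj).2) (fun j => 2 * O j)]
                apply Finset.sum_congr rfl; intro r hr
                congr 1
                ext j
                simp only [mem_filter, mem_univ, true_and]
                constructor
                · intro h; exact ⟨h ▸ hr, h⟩
                · intro h; exact h.2
            _ ≤ ∑ j ∈ univ.filter (fun j => φ j ∈ Ri), 2 * O j := by
                apply Finset.sum_le_sum_of_subset_of_nonneg
                · apply Finset.monotone_filter_right
                  intro j _ hj; exact hRhat hj
                · intro j _ _; have := hOnn j; linarith
            _ = 2 * T2 := by rw [hT2, Finset.mul_sum]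
      _ = ((s : ℝ) - 1) * (∑ fs ∈ Fsi, ∑ j ∈ univ.filter (fun j => φstar j = fs), (O j - A j))
            + (s : ℝ) * (2 * T2) := by
          rw [Finset.sum_add_distrib, Finset.sum_const, hFsicard, nsmul_eq_mul,
            ← Finset.mul_sum]
      _ = ((s : ℝ) - 1) * T1 + (s : ℝ) * (2 * T2) := by
          congr 2
          rw [hT1, ← Finset.sum_fiberwise_of_maps_to
            (fun j hj => (mem_filter.mp hj).2) (fun j => O j - A j)]
          apply Finset.sum_congr rfl; intro fs hfs
          congr 1
          ext j
          simp only [mem_filter, mem_univ, true_and]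
          constructor
          · intro h; exact ⟨h ▸ hfs, h⟩
          · intro h; exact h.2
  -- final arithmetic
  have hc : (0:ℝ) < (s:ℝ) - 1 := by
    have : (2:ℝ) ≤ (s:ℝ) := by exact_mod_cast hs2
    linarith
  have ht0 : (0:ℝ) < (t:ℝ) := by exact_mod_cast ht
  have hts : (t:ℝ) + 1 ≤ (s:ℝ) := by exact_mod_cast Nat.succ_le_of_lt hst
  have hsc : (s:ℝ) / ((s:ℝ) - 1) ≤ 1 + 1 / (t:ℝ) := by
    rw [div_le_iff₀ hc]
    have hti : (t:ℝ) * (1 / (t:ℝ)) = 1 := mul_one_div_cancel (ne_of_gt ht0)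
    nlinarith [hti, hts, ht0, hc]
  have hmain : (1 / ((s:ℝ) - 1)) * (((s:ℝ) - 1) * T1 + (s:ℝ) * (2 * T2)) ≤
      T1 + 2 * (1 + 1 / (t:ℝ)) * T2 := by
    have hexp : (1 / ((s:ℝ) - 1)) * (((s:ℝ) - 1) * T1 + (s:ℝ) * (2 * T2)) =
        T1 + ((s:ℝ) / ((s:ℝ) - 1)) * (2 * T2) := by
      field_simp
    rw [hexp]
    have := mul_le_mul_of_nonneg_right hsc (by linarith : (0:ℝ) ≤ 2 * T2)
    linarith
  calc (1 / ((s:ℝ) - 1)) * ∑ p ∈ Fsi ×ˢ Rhat,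
        (kmed (insert p.1 (F.erase p.2)) (insert_nonempty _ _) - kmed F hF)
      ≤ (1 / ((s:ℝ) - 1)) * (((s:ℝ) - 1) * T1 + (s:ℝ) * (2 * T2)) := by
        apply mul_le_mul_of_nonneg_left hpair
        positivity
    _ ≤ T1 + 2 * (1 + 1 / (t:ℝ)) * T2 := hmain
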